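/- For λ₁, λ₂ > 0 and |m| > 0, θ with sin 2θ ≠ 0, the coefficient c₂ = (1/2)((tr A)² - tr A²) of the 4×4 matrix A from Appendix A equals |m|²((λ₁-λ₂)² + 4λ₁λ₂csc²2θ)·csc²2θ/(λ₁λ₂), and in particular c₂ ≥ 0. -/

import Mathlib

open Matrix Real

set_option maxHeartbeats 2000000

/-- The 4×4 matrix from Appendix A of the two-dimensional causality proof. -/
noncomputable def appendixAMatrix (lam1 lam2 : ℝ) (m : ℂ) (θ : ℝ) : Matrix (Fin 4) (Fin 4) ℂ :=
  !![(((1/2) * Real.sqrt (lam2/lam1) * ‖m‖ / (Real.sin θ)^2 : ℝ) : ℂ), 0, 0,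
        m / (Real.sin (2*θ));
     0, (((1/2) * Real.sqrt (lam1/lam2) * ‖m‖ / (Real.sin θ)^2 : ℝ) : ℂ),
        -(m / (Real.sin (2*θ))), 0;
     0, -((starRingEnd ℂ) m / (Real.sin (2*θ))),
        (((1/2) * Real.sqrt (lam2/lam1) * ‖m‖ / (Real.cos θ)^2 : ℝ) : ℂ), 0;
     (starRingEnd ℂ) m / (Real.sin (2*θ)), 0, 0,
        (((1/2) * Real.sqrt (lam1/lam2) * ‖m‖ / (Real.cos θ)^2 : ℝ) : ℂ)]

theorem stmt_17 (lam1 lam2 : ℝ) (hlam1 : 0 < lam1) (hlam2 : 0 < lam2)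
    (m : ℂ) (hm : 0 < ‖m‖) (θ : ℝ) (hθ : Real.sin (2*θ) ≠ 0) :
    (1/2 : ℂ) * ((appendixAMatrix lam1 lam2 m θ).trace ^ 2 -
        (appendixAMatrix lam1 lam2 m θ * appendixAMatrix lam1 lam2 m θ).trace) =
      ((‖m‖ ^ 2 * ((lam1 - lam2)^2 + 4 * lam1 * lam2 * (1 / Real.sin (2*θ))^2)
          * (1 / Real.sin (2*θ))^2 / (lam1 * lam2) : ℝ) : ℂ) ∧
    0 ≤ ‖m‖ ^ 2 * ((lam1 - lam2)^2 + 4 * lam1 * lam2 * (1 / Real.sin (2*θ))^2)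
          * (1 / Real.sin (2*θ))^2 / (lam1 * lam2) := by
  constructor
  · have h2 : Real.sin (2*θ) = 2 * Real.sin θ * Real.cos θ := Real.sin_two_mul θ
    have hs : Real.sin θ ≠ 0 := fun h => hθ (by rw [h2, h]; ring)
    have hc : Real.cos θ ≠ 0 := fun h => hθ (by rw [h2, h]; ring)
    have hmc : m * (starRingEnd ℂ) m = ((‖m‖ ^ 2 : ℝ) : ℂ) := by
      rw [Complex.mul_conj]; norm_cast; exact (Complex.sq_norm m).symm
    have hcm : (starRingEnd ℂ) m * m = ((‖m‖ ^ 2 : ℝ) : ℂ) := by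
      rw [mul_comm]; exact hmc
    have hC2 : Complex.sin (2 * (θ:ℂ)) = ((Real.sin (2*θ) : ℝ) : ℂ) := by
      rw [Complex.ofReal_sin]; push_cast; ring_nf
    simp [appendixAMatrix, Matrix.trace, Matrix.mul_apply, Fin.sum_univ_four, Matrix.diag]
    rw [hC2, ← Complex.ofReal_sin, ← Complex.ofReal_cos]
    rw [div_mul_div_comm, div_mul_div_comm, div_mul_div_comm, div_mul_div_comm, hmc, hcm]
    norm_cast
    have hu : Real.sin θ ^ 2 ≠ 0 := pow_ne_zero _ hs
    have hv : Real.cos θ ^ 2 ≠ 0 := pow_ne_zero _ hc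
    have hpy : Real.cos θ ^ 2 = 1 - Real.sin θ ^ 2 := by
      have := Real.sin_sq_add_cos_sq θ; linarith
    have key : 2⁻¹ *
        ((2⁻¹ * √(lam2 / lam1) * ‖m‖ / (Real.sin θ ^ 2) +
                  2⁻¹ * √(lam1 / lam2) * ‖m‖ / (Real.sin θ ^ 2) +
                2⁻¹ * √(lam2 / lam1) * ‖m‖ / (Real.cos θ ^ 2) +
              2⁻¹ * √(lam1 / lam2) * ‖m‖ / (Real.cos θ ^ 2)) ^ 2 -
          (2⁻¹ * √(lam2 / lam1) * ‖m‖ * (2⁻¹ * √(lam2 / lam1) * ‖m‖) /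
                    (Real.sin θ ^ 2 * Real.sin θ ^ 2) +
                  ‖m‖ ^ 2 / (Real.sin (2 * θ) * Real.sin (2 * θ)) +
                (2⁻¹ * √(lam1 / lam2) * ‖m‖ * (2⁻¹ * √(lam1 / lam2) * ‖m‖) /
                    (Real.sin θ ^ 2 * Real.sin θ ^ 2) +
                  ‖m‖ ^ 2 / (Real.sin (2 * θ) * Real.sin (2 * θ))) +
              (‖m‖ ^ 2 / (Real.sin (2 * θ) * Real.sin (2 * θ)) +
                2⁻¹ * √(lam2 / lam1) * ‖m‖ / (Real.cos θ ^ 2) *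
                  (2⁻¹ * √(lam2 / lam1) * ‖m‖ / (Real.cos θ ^ 2))) +
            (‖m‖ ^ 2 / (Real.sin (2 * θ) * Real.sin (2 * θ)) +
              2⁻¹ * √(lam1 / lam2) * ‖m‖ / (Real.cos θ ^ 2) *
                (2⁻¹ * √(lam1 / lam2) * ‖m‖ / (Real.cos θ ^ 2))))) =
      ‖m‖ ^ 2 * ((lam1 - lam2) ^ 2 + 4 * lam1 * lam2 * (Real.sin (2 * θ) ^ 2)⁻¹) *
          (Real.sin (2 * θ) ^ 2)⁻¹ / (lam1 * lam2) := by
      have hx : Real.sqrt lam1 ≠ 0 := by positivity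
      have hy : Real.sqrt lam2 ≠ 0 := by positivity
      have hsq1 : Real.sqrt lam1 ^ 2 = lam1 := Real.sq_sqrt hlam1.le
      have hsq2 : Real.sqrt lam2 ^ 2 = lam2 := Real.sq_sqrt hlam2.le
      have haxy : Real.sqrt (lam2/lam1) = Real.sqrt lam2 / Real.sqrt lam1 :=
        Real.sqrt_div hlam2.le lam1
      have hbxy : Real.sqrt (lam1/lam2) = Real.sqrt lam1 / Real.sqrt lam2 :=
        Real.sqrt_div hlam1.le lam2
      have hS : Real.sin (2*θ) * Real.sin (2*θ) = 4 * Real.sin θ ^ 2 * Real.cos θ ^ 2 := by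
        rw [h2]; ring
      have hS2 : Real.sin (2*θ) ^ 2 = 4 * Real.sin θ ^ 2 * Real.cos θ ^ 2 := by
        rw [h2]; ring
      have hv' : (1 : ℝ) - Real.sin θ ^ 2 ≠ 0 := hpy ▸ hv
      rw [haxy, hbxy, hS, hS2, hpy]
      set x := Real.sqrt lam1 with hxdef
      set y := Real.sqrt lam2 with hydef
      rw [← hsq1, ← hsq2]
      generalize Real.sin θ ^ 2 = u at hu hv' ⊢
      field_simp
      ring
    have keyC := congrArg (Complex.ofReal) key
    push_cast at keyC ⊢
    linear_combination keyC
  · positivity
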